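/- Suppose that the m×m matrix F with entries f_ii = 1 and f_ij = −A_ij/α_i for i ≠ j is a nonsingular M-matrix. Then the linear system with non-delayed diagonal terms ẋ_i(t) = −a_i(t)x_i(t) + Σ_{j≠i} a_{ij}(t)x_j(g_{ij}(t)) is exponentially stable. -/

import Mathlib

open MeasureTheory

lemma exp_sub_one_le' (x : ℝ) : Real.exp x - 1 ≤ x * Real.exp x := by
  have h := Real.add_one_le_exp (-x)
  have hp : 0 < Real.exp x := Real.exp_pos x
  have h2 : Real.exp (-x) * Real.exp x = 1 := by
    rw [← Real.exp_add]; simp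
  nlinarith [h, hp]

set_option maxHeartbeats 1000000 in
lemma core_lemma (t₀ ts lam αp B c ρ : ℝ) (h0 : t₀ < ts)
    (hlam : 0 < lam) (hα : 0 < αp) (hB : 0 < B) (hρ : 0 < ρ) (hcpos : 0 ≤ c)
    (u av h : ℝ → ℝ) (hu : Continuous u)
    (heq : ∀ t', t₀ ≤ t' → t' ≤ ts →
      (IntervalIntegrable (fun s => -(av s) * u s + h s) volume t' ts ∧
      u ts = u t' + ∫ s in t'..ts, (-(av s) * u s + h s)))
    (hav : ∀ s, t₀ ≤ s → s ≤ ts → αp ≤ av s)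
    (hub : ∀ s, t₀ ≤ s → s ≤ ts → u s ≤ B * Real.exp (-lam * (s - t₀)))
    (hh : ∀ s, t₀ ≤ s → s ≤ ts → h s ≤ c * Real.exp (-lam * (s - t₀)))
    (hc : B * lam + c ≤ αp * B - ρ)
    (hBeq : u ts = B * Real.exp (-lam * (ts - t₀))) : False := by
  obtain ⟨E, hE⟩ : ∃ z : ℝ, z = Real.exp (-lam * (ts - t₀)) := ⟨_, rfl⟩
  have hEpos : 0 < E := by rw [hE]; exact Real.exp_pos _
  have hBE : u ts = B * E := by rw [hBeq, hE]
  have hαB : 0 < αp * B := mul_pos hα hB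
  have hut : 0 < u ts := by rw [hBE]; exact mul_pos hB hEpos
  obtain ⟨θ, hθdef⟩ : ∃ z : ℝ, z = 1 - ρ / (4 * (αp * B + ρ)) := ⟨_, rfl⟩
  have hden : 0 < 4 * (αp * B + ρ) := by linarith
  have hθ1 : θ < 1 := by
    have : 0 < ρ / (4 * (αp * B + ρ)) := div_pos hρ hden
    rw [hθdef]; linarith
  have hθ0 : 0 < θ := by
    have : ρ / (4 * (αp * B + ρ)) < 1 := by
      rw [div_lt_one hden]; linarith
    rw [hθdef]; linarith
  have hθB : αp * B - ρ / 4 ≤ αp * θ * B := by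
    have heq1 : αp * θ * B = αp * B - αp * B * (ρ / (4 * (αp * B + ρ))) := by
      rw [hθdef]; ring
    rw [heq1]
    have h2 : αp * B * (ρ / (4 * (αp * B + ρ))) ≤ ρ / 4 := by
      rw [← mul_div_assoc, div_le_div_iff₀ hden (by norm_num : (0:ℝ) < 4)]
      have hsq : 0 ≤ ρ * ρ := mul_nonneg hρ.le hρ.le
      linarith [hsq]
    linarith
  have hopen : IsOpen {s : ℝ | θ * u ts < u s} := isOpen_lt continuous_const hu
  have hmem : ts ∈ {s : ℝ | θ * u ts < u s} := by
    simp only [Set.mem_setOf_eq]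
    calc θ * u ts < 1 * u ts := mul_lt_mul_of_pos_right hθ1 hut
      _ = u ts := one_mul _
  obtain ⟨δ, hδ0, hball⟩ := Metric.isOpen_iff.mp hopen ts hmem
  obtain ⟨r, hrdef⟩ : ∃ z : ℝ, z = 3 * ρ / (4 * (αp * B + ρ)) := ⟨_, rfl⟩
  have hr0 : 0 < r := by rw [hrdef]; exact div_pos (by linarith) hden
  obtain ⟨δ2, hδ2def⟩ : ∃ z : ℝ, z = Real.log (1 + r) / lam := ⟨_, rfl⟩
  have hδ20 : 0 < δ2 := by
    rw [hδ2def]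
    exact div_pos (Real.log_pos (by linarith)) hlam
  obtain ⟨δm, hδmdef⟩ : ∃ z : ℝ, z = min (δ / 2) δ2 := ⟨_, rfl⟩
  have hδm0 : 0 < δm := by rw [hδmdef]; exact lt_min (by linarith) hδ20
  obtain ⟨t', ht'def⟩ : ∃ z : ℝ, z = max t₀ (ts - δm) := ⟨_, rfl⟩
  have ht'0 : t₀ ≤ t' := by rw [ht'def]; exact le_max_left _ _
  have ht'lt : t' < ts := by rw [ht'def]; exact max_lt h0 (by linarith)
  obtain ⟨Δ, hΔdef⟩ : ∃ z : ℝ, z = ts - t' := ⟨_, rfl⟩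
  have hΔ0 : 0 < Δ := by rw [hΔdef]; linarith
  have hΔδm : Δ ≤ δm := by
    have : ts - δm ≤ t' := by rw [ht'def]; exact le_max_right _ _
    rw [hΔdef]; linarith
  have hΔδ : Δ < δ := by
    have h1 : δm ≤ δ / 2 := by rw [hδmdef]; exact min_le_left _ _
    linarith
  obtain ⟨X, hX⟩ : ∃ z : ℝ, z = Real.exp (lam * Δ) := ⟨_, rfl⟩
  have hX1 : 1 ≤ X := by
    rw [hX, ← Real.exp_zero]
    exact Real.exp_le_exp.mpr (mul_nonneg hlam.le hΔ0.le)
  have hX0 : 0 < X := lt_of_lt_of_le one_pos hX1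
  have hexpΔ : X ≤ 1 + r := by
    have h1 : lam * Δ ≤ Real.log (1 + r) := by
      have hle : Δ ≤ Real.log (1 + r) / lam := by
        have h1 : δm ≤ δ2 := by rw [hδmdef]; exact min_le_right _ _
        rw [hδ2def] at h1; linarith
      calc lam * Δ ≤ lam * (Real.log (1 + r) / lam) :=
            mul_le_mul_of_nonneg_left hle hlam.le
        _ = Real.log (1 + r) := by field_simp
    calc X = Real.exp (lam * Δ) := hX
      _ ≤ Real.exp (Real.log (1 + r)) := Real.exp_le_exp.mpr h1
      _ = 1 + r := Real.exp_log (by linarith)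
  have hunear : ∀ s, t' ≤ s → s ≤ ts → θ * u ts < u s := by
    intro s hs1 hs2
    apply hball
    rw [Metric.mem_ball, Real.dist_eq, abs_of_nonpos (by linarith)]
    have : ts - s ≤ Δ := by rw [hΔdef]; linarith
    linarith
  obtain ⟨hInt', heq'⟩ := heq t' ht'0 ht'lt.le
  obtain ⟨E', hE'⟩ : ∃ z : ℝ, z = Real.exp (-lam * (t' - t₀)) := ⟨_, rfl⟩
  have hEE' : E' = E * X := by
    rw [hE', hE, hX, ← Real.exp_add]; congr 1; rw [hΔdef]; ring
  obtain ⟨C, hC⟩ : ∃ z : ℝ, z = -(αp * (θ * u ts)) + c * E' := ⟨_, rfl⟩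
  have hptwise : ∀ s ∈ Set.Icc t' ts, -(av s) * u s + h s ≤ C := by
    intro s hs
    obtain ⟨hs1, hs2⟩ := hs
    have hs0 : t₀ ≤ s := le_trans ht'0 hs1
    have h1 : αp * (θ * u ts) ≤ av s * u s := by
      have hus : θ * u ts < u s := hunear s hs1 hs2
      have hus0 : 0 < u s := lt_trans (mul_pos hθ0 hut) hus
      calc αp * (θ * u ts) ≤ αp * u s :=
            mul_le_mul_of_nonneg_left hus.le hα.le
        _ ≤ av s * u s := mul_le_mul_of_nonneg_right (hav s hs0 hs2) hus0.le
    have h2 : h s ≤ c * E' := by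
      refine (hh s hs0 hs2).trans ?_
      rw [hE']
      refine mul_le_mul_of_nonneg_left ?_ hcpos
      apply Real.exp_le_exp.mpr
      have := mul_le_mul_of_nonneg_left (show t' - t₀ ≤ s - t₀ by linarith) hlam.le
      linarith
    rw [hC]; linarith
  have hintle : u ts ≤ u t' + Δ * C := by
    rw [heq']
    have hmono := intervalIntegral.integral_mono_on ht'lt.le hInt'
      (intervalIntegrable_const (c := C)) hptwise
    rw [intervalIntegral.integral_const, smul_eq_mul] at hmono
    rw [hΔdef]; linarith
  have hut'' : u t' ≤ B * (E * X) := by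
    have h := hub t' ht'0 ht'lt.le
    rw [← hE', hEE'] at h; exact h
  have hCval : C = -(αp * (θ * (B * E))) + c * (E * X) := by
    rw [hC, hBE, hEE']
  have hcomb : B * E ≤ B * (E * X) + Δ * (-(αp * (θ * (B * E))) + c * (E * X)) := by
    rw [← hCval]
    linarith [hintle, hut'', hBE.symm.le, hBE.le]
  have hexp1 : X - 1 ≤ lam * Δ * X := by
    have := exp_sub_one_le' (lam * Δ); rw [← hX] at this; linarith
  have h1 : Δ * (αp * θ * B) * E ≤ B * E * (X - 1) + Δ * c * (E * X) := by
    linarith [hcomb]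
  have h2 : B * E * (X - 1) ≤ B * E * (lam * Δ * X) :=
    mul_le_mul_of_nonneg_left hexp1 (mul_nonneg hB.le hEpos.le)
  have h3 : Δ * (αp * θ * B) * E ≤ Δ * E * X * (B * lam + c) := by linarith [h1, h2]
  have h4 : Δ * E * X * (B * lam + c) ≤ Δ * E * X * (αp * B - ρ) :=
    mul_le_mul_of_nonneg_left hc (mul_nonneg (mul_nonneg hΔ0.le hEpos.le) hX0.le)
  have hΔE : 0 < Δ * E := mul_pos hΔ0 hEpos
  have hkey : αp * θ * B ≤ X * (αp * B) - X * ρ := by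
    have h5 : Δ * E * (αp * θ * B) ≤ Δ * E * (X * (αp * B) - X * ρ) := by
      linarith [h3, h4]
    exact (mul_le_mul_iff_right₀ hΔE).mp h5
  have hXρ : ρ ≤ X * ρ := by
    have := mul_le_mul_of_nonneg_right hX1 hρ.le
    linarith [this]
  have hfin1 : 3 / 4 * ρ ≤ (X - 1) * (αp * B) := by linarith [hθB, hkey, hXρ]
  have hfin2 : (X - 1) * (αp * B) ≤ r * (αp * B) :=
    mul_le_mul_of_nonneg_right (by linarith) hαB.le
  have hfin3 : r * (αp * B) < 3 / 4 * ρ := by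
    rw [hrdef, div_mul_eq_mul_div, div_lt_iff₀ hden]
    have hsq : 0 < ρ * ρ := mul_pos hρ hρ
    linarith [hsq]
  linarith

/-- Corollary 2.5: if the matrix `F` with `f_ii = 1` and `f_ij = −A_ij/α_i` (i ≠ j) is a
nonsingular M-matrix, then the linear system with non-delayed diagonal terms
`ẋ_i(t) = −a_i(t) x_i(t) + Σ_{j≠i} a_{ij}(t) x_j(g_{ij}(t))` is exponentially stable. -/
theorem stmt4
    (m : ℕ) (hm : 0 < m)
    (a : Fin m → ℝ → ℝ) (aoff : Fin m → Fin m → ℝ → ℝ)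
    (α A : Fin m → ℝ) (Aoff : Fin m → Fin m → ℝ)
    (g : Fin m → Fin m → ℝ → ℝ) (σ : ℝ)
    (ha_meas : ∀ i, Measurable (a i))
    (haoff_meas : ∀ i j, Measurable (aoff i j))
    (hα : ∀ i, 0 < α i)
    (ha_bd : ∀ i t, 0 ≤ t → α i ≤ a i t ∧ a i t ≤ A i)
    (haoff_bd : ∀ i j, i ≠ j → ∀ t, 0 ≤ t → |aoff i j t| ≤ Aoff i j)
    (hg_meas : ∀ i j, Measurable (g i j))
    (hg : ∀ i j t, 0 ≤ t → 0 ≤ t - g i j t ∧ t - g i j t ≤ σ)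
    -- the matrix F of (9)
    (Fm : Matrix (Fin m) (Fin m) ℝ)
    (hF_def : ∀ i j, Fm i j = if i = j then 1 else -(Aoff i j) / α i)
    -- F is a nonsingular M-matrix
    (hF_offdiag : ∀ i j, i ≠ j → Fm i j ≤ 0)
    (hF_unit : IsUnit Fm.det)
    (hF_invpos : ∀ i j, 0 < Fm⁻¹ i j) :
    -- exponential stability
    ∃ M Λ : ℝ, 0 < M ∧ 0 < Λ ∧
      ∀ t₀ : ℝ, 0 ≤ t₀ → ∀ x : Fin m → ℝ → ℝ,
        (∀ i, Continuous (x i)) →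
        (∀ i t, t₀ ≤ t → IntervalIntegrable
            (fun s => -(a i s) * x i s +
              ∑ j ∈ Finset.univ.erase i, aoff i j s * x j (g i j s)) volume t₀ t) →
        (∀ i t, t₀ ≤ t →
          x i t = x i t₀ + ∫ s in t₀..t,
            (-(a i s) * x i s +
              ∑ j ∈ Finset.univ.erase i, aoff i j s * x j (g i j s))) →
        ∀ t, t₀ ≤ t →
          ‖(fun i => x i t : Fin m → ℝ)‖ ≤
            M * Real.exp (-Λ * (t - t₀)) *
              (‖(fun i => x i t₀ : Fin m → ℝ)‖ +
                sSup ((fun s => ‖(fun i => x i s : Fin m → ℝ)‖) ''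
                  Set.Icc (t₀ - σ) t₀)) := by
  haveI : Nonempty (Fin m) := ⟨⟨0, hm⟩⟩
  have hne : (Finset.univ : Finset (Fin m)).Nonempty := Finset.univ_nonempty
  -- nonnegativity of the off-diagonal bounds and of the delay bound
  have hAoff : ∀ i j, i ≠ j → 0 ≤ Aoff i j := fun i j hij =>
    le_trans (abs_nonneg _) (haoff_bd i j hij 0 le_rfl)
  have hσ : 0 ≤ σ := by
    obtain ⟨i0⟩ := (inferInstance : Nonempty (Fin m))
    have := hg i0 i0 0 le_rfl
    linarith [this.1, this.2]
  -- the positive vector d with F d = 1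
  obtain ⟨d, hd, hFd⟩ : ∃ d : Fin m → ℝ, (∀ i, 0 < d i) ∧
      (∀ i, ∑ j ∈ Finset.univ.erase i, Aoff i j * d j = α i * (d i - 1)) := by
    refine ⟨fun i => ∑ j, Fm⁻¹ i j, fun i => Finset.sum_pos (fun j _ => hF_invpos i j)
      Finset.univ_nonempty, ?_⟩
    intro i
    have hFF : Fm * Fm⁻¹ = 1 := Matrix.mul_nonsing_inv Fm hF_unit
    have hsum : ∑ k, Fm i k * ∑ j, Fm⁻¹ k j = 1 := by
      calc ∑ k, Fm i k * ∑ j, Fm⁻¹ k j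
          = ∑ k, ∑ j, Fm i k * Fm⁻¹ k j := by
            refine Finset.sum_congr rfl fun k _ => ?_
            rw [Finset.mul_sum]
        _ = ∑ j, ∑ k, Fm i k * Fm⁻¹ k j := Finset.sum_comm
        _ = ∑ j, (Fm * Fm⁻¹) i j := by
            refine Finset.sum_congr rfl fun j _ => ?_
            rw [Matrix.mul_apply]
        _ = ∑ j : Fin m, (1 : Matrix (Fin m) (Fin m) ℝ) i j := by rw [hFF]
        _ = 1 := by simp [Matrix.one_apply]
    set d : Fin m → ℝ := fun i => ∑ j, Fm⁻¹ i j with hddef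
    rw [← Finset.add_sum_erase Finset.univ (fun k => Fm i k * d k)
      (Finset.mem_univ i)] at hsum
    rw [hF_def i i, if_pos rfl, one_mul] at hsum
    have h2 : ∑ k ∈ Finset.univ.erase i, Fm i k * d k
        + (∑ k ∈ Finset.univ.erase i, Aoff i k * d k) / α i = 0 := by
      rw [Finset.sum_div, ← Finset.sum_add_distrib]
      apply Finset.sum_eq_zero
      intro k hk
      have hki : i ≠ k := (Finset.ne_of_mem_erase hk).symm
      rw [hF_def i k, if_neg hki]
      field_simp
      ring
    have hαne : α i ≠ 0 := (hα i).ne'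
    have h3 : (∑ k ∈ Finset.univ.erase i, Aoff i k * d k) / α i = d i - 1 := by linarith
    rw [div_eq_iff hαne] at h3
    rw [h3]; ring
  have hd1 : ∀ i, 1 ≤ d i := by
    intro i
    have h1 : 0 ≤ ∑ j ∈ Finset.univ.erase i, Aoff i j * d j :=
      Finset.sum_nonneg fun j hj =>
        mul_nonneg (hAoff i j (Finset.ne_of_mem_erase hj).symm) (hd j).le
    rw [hFd i] at h1
    nlinarith [hα i, h1]
  -- the decay rate lam
  have hden : ∀ i, 0 < d i + σ * Real.exp σ * (α i * (d i - 1)) + 1 := by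
    intro i
    have h1 : 0 ≤ σ * Real.exp σ * (α i * (d i - 1)) := by
      apply mul_nonneg (mul_nonneg hσ (Real.exp_pos σ).le)
      exact mul_nonneg (hα i).le (by linarith [hd1 i])
    linarith [hd1 i]
  obtain ⟨lam, hlamdef⟩ : ∃ z : ℝ, z = min 1 (Finset.univ.inf' hne
      (fun i => (α i / 2) / (d i + σ * Real.exp σ * (α i * (d i - 1)) + 1))) := ⟨_, rfl⟩
  have hlam0 : 0 < lam := by
    rw [hlamdef]
    refine lt_min one_pos ((Finset.lt_inf'_iff hne).mpr fun i _ => ?_)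
    exact div_pos (by linarith [hα i]) (hden i)
  have hlam1 : lam ≤ 1 := by rw [hlamdef]; exact min_le_left _ _
  have key : ∀ i, lam * d i + Real.exp (lam * σ) * (α i * (d i - 1))
      ≤ α i * d i - α i / 2 := by
    intro i
    have hQ0 : 0 ≤ α i * (d i - 1) := mul_nonneg (hα i).le (by linarith [hd1 i])
    obtain ⟨Q, hQdef⟩ : ∃ z : ℝ, z = α i * (d i - 1) := ⟨_, rfl⟩
    rw [← hQdef] at hQ0 ⊢
    have hls0 : 0 ≤ lam * σ := mul_nonneg hlam0.le hσ
    have he1 : Real.exp (lam * σ) - 1 ≤ (lam * σ) * Real.exp (lam * σ) :=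
      exp_sub_one_le' _
    have he2 : Real.exp (lam * σ) ≤ Real.exp σ := by
      apply Real.exp_le_exp.mpr
      calc lam * σ ≤ 1 * σ := mul_le_mul_of_nonneg_right hlam1 hσ
        _ = σ := one_mul σ
    have he3 : (lam * σ) * Real.exp (lam * σ) ≤ (lam * σ) * Real.exp σ :=
      mul_le_mul_of_nonneg_left he2 hls0
    have he5 : Real.exp (lam * σ) * Q ≤ (1 + lam * σ * Real.exp σ) * Q :=
      mul_le_mul_of_nonneg_right (by linarith) hQ0
    have hld2 : lam * (d i + σ * Real.exp σ * Q) ≤ α i / 2 := by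
      have hinf' : lam ≤ (α i / 2) / (d i + σ * Real.exp σ * Q + 1) := by
        rw [hlamdef, hQdef]
        exact (min_le_right _ _).trans (Finset.inf'_le _ (Finset.mem_univ i))
      have hdeni : 0 < d i + σ * Real.exp σ * Q + 1 := by rw [hQdef]; exact hden i
      have h1 := (le_div_iff₀ hdeni).mp hinf'
      linarith
    have hexpand : (1 + lam * σ * Real.exp σ) * Q
        = Q + lam * (σ * Real.exp σ * Q) := by ring
    have hgoal : α i * d i - α i / 2 = Q + α i / 2 := by rw [hQdef]; ring
    rw [hgoal]
    linarith [he5, hld2]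
  -- the constants
  obtain ⟨dm, hdmdef⟩ : ∃ z : ℝ, z = Finset.univ.inf' hne d := ⟨_, rfl⟩
  obtain ⟨D, hDdef⟩ : ∃ z : ℝ, z = Finset.univ.sup' hne d := ⟨_, rfl⟩
  have hdm_le : ∀ i, dm ≤ d i := fun i => by
    rw [hdmdef]; exact Finset.inf'_le d (Finset.mem_univ i)
  have hD_ge : ∀ i, d i ≤ D := fun i => by
    rw [hDdef]; exact Finset.le_sup' d (Finset.mem_univ i)
  have hdm0 : 0 < dm := by
    rw [hdmdef]; exact (Finset.lt_inf'_iff hne).mpr fun i _ => hd i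
  have hD0 : 0 < D := lt_of_lt_of_le hdm0 ((hdm_le ⟨0, hm⟩).trans (hD_ge ⟨0, hm⟩))
  refine ⟨D / dm, lam, div_pos hD0 hdm0, hlam0, ?_⟩
  intro t₀ ht₀ x hxc hxint hxeq t ht
  -- continuity of the norm
  have hXcont : Continuous fun s => ‖(fun i => x i s : Fin m → ℝ)‖ :=
    (continuous_pi fun i => hxc i).norm
  obtain ⟨S, hSdef⟩ : ∃ z : ℝ, z = ‖(fun i => x i t₀ : Fin m → ℝ)‖ +
      sSup ((fun s => ‖(fun i => x i s : Fin m → ℝ)‖) '' Set.Icc (t₀ - σ) t₀) :=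
    ⟨_, rfl⟩
  have hbdd : BddAbove ((fun s => ‖(fun i => x i s : Fin m → ℝ)‖) ''
      Set.Icc (t₀ - σ) t₀) := (isCompact_Icc.image hXcont).bddAbove
  have hsup_ge : ∀ s, t₀ - σ ≤ s → s ≤ t₀ →
      ‖(fun i => x i s : Fin m → ℝ)‖ ≤ S := by
    intro s h1 h2
    have h3 : ‖(fun i => x i s : Fin m → ℝ)‖ ≤
        sSup ((fun s => ‖(fun i => x i s : Fin m → ℝ)‖) '' Set.Icc (t₀ - σ) t₀) :=
      le_csSup hbdd ⟨s, ⟨h1, h2⟩, rfl⟩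
    rw [hSdef]
    have := norm_nonneg (fun i => x i t₀ : Fin m → ℝ)
    linarith
  have hS0 : 0 ≤ S :=
    le_trans (norm_nonneg _) (hsup_ge t₀ (by linarith) le_rfl)
  have hcoord : ∀ j s, t₀ - σ ≤ s → s ≤ t₀ → |x j s| ≤ S := by
    intro j s h1 h2
    have h3 := norm_le_pi_norm (fun i => x i s : Fin m → ℝ) j
    rw [Real.norm_eq_abs] at h3
    exact h3.trans (hsup_ge s h1 h2)
  -- main estimate
  have main : ∀ ε, 0 < ε → ∀ i τ, t₀ ≤ τ →
      |x i τ| ≤ (S + ε) / dm * (d i * Real.exp (-lam * (τ - t₀))) := by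
    intro ε hε
    by_contra hcon
    push_neg at hcon
    obtain ⟨i₁, t₁, ht₁, hgt⟩ := hcon
    obtain ⟨K, hKdef⟩ : ∃ z : ℝ, z = (S + ε) / dm := ⟨_, rfl⟩
    rw [← hKdef] at hgt
    have hK0 : 0 < K := by rw [hKdef]; exact div_pos (by linarith) hdm0
    have hKdm : K * dm = S + ε := by rw [hKdef]; field_simp
    -- maximizers of Φ_j on [t₀, t₁]
    have hΦc : ∀ j : Fin m,
        Continuous fun s => |x j s| * Real.exp (lam * (s - t₀)) / d j := by
      intro j
      exact (((hxc j).abs).mul (Real.continuous_exp.comp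
        (continuous_const.mul (continuous_id.sub continuous_const)))).div_const _
    have hmaxex : ∀ j : Fin m, ∃ sj ∈ Set.Icc t₀ t₁,
        IsMaxOn (fun s => |x j s| * Real.exp (lam * (s - t₀)) / d j)
          (Set.Icc t₀ t₁) sj :=
      fun j => isCompact_Icc.exists_isMaxOn ⟨t₀, le_rfl, ht₁⟩ (hΦc j).continuousOn
    choose sel hsel1 hsel2 using hmaxex
    obtain ⟨μ, hμdef⟩ : ∃ z : ℝ, z = Finset.univ.sup' hne
        (fun j => |x j (sel j)| * Real.exp (lam * (sel j - t₀)) / d j) := ⟨_, rfl⟩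
    obtain ⟨i, -, hieq⟩ := Finset.exists_mem_eq_sup' hne
      (fun j => |x j (sel j)| * Real.exp (lam * (sel j - t₀)) / d j)
    obtain ⟨ts, htsdef⟩ : ∃ z : ℝ, z = sel i := ⟨_, rfl⟩
    have hts1 : t₀ ≤ ts ∧ ts ≤ t₁ := by
      rw [htsdef]; exact ⟨(hsel1 i).1, (hsel1 i).2⟩
    have hμmax : ∀ j s, t₀ ≤ s → s ≤ t₁ →
        |x j s| * Real.exp (lam * (s - t₀)) / d j ≤ μ := by
      intro j s h1 h2
      have h3 := hsel2 j (⟨h1, h2⟩ : s ∈ Set.Icc t₀ t₁)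
      rw [hμdef]
      exact le_trans h3 (Finset.le_sup'
        (fun j => |x j (sel j)| * Real.exp (lam * (sel j - t₀)) / d j)
        (Finset.mem_univ j))
    have hbound : ∀ j s, t₀ ≤ s → s ≤ t₁ →
        |x j s| ≤ μ * d j * Real.exp (-lam * (s - t₀)) := by
      intro j s h1 h2
      have h3 := hμmax j s h1 h2
      rw [div_le_iff₀ (hd j)] at h3
      have h4 := mul_le_mul_of_nonneg_right h3 (Real.exp_pos (-lam * (s - t₀))).le
      rw [mul_assoc, ← Real.exp_add,
        (show lam * (s - t₀) + -lam * (s - t₀) = 0 by ring),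
        Real.exp_zero, mul_one] at h4
      exact h4
    have hμK : K < μ := by
      by_contra hle
      push_neg at hle
      have h3 : |x i₁ t₁| ≤ K * d i₁ * Real.exp (-lam * (t₁ - t₀)) := by
        calc |x i₁ t₁| ≤ μ * d i₁ * Real.exp (-lam * (t₁ - t₀)) :=
              hbound i₁ t₁ ht₁ le_rfl
          _ ≤ K * d i₁ * Real.exp (-lam * (t₁ - t₀)) :=
              mul_le_mul_of_nonneg_right
                (mul_le_mul_of_nonneg_right hle (hd i₁).le) (Real.exp_pos _).le
      have h5 : K * (d i₁ * Real.exp (-lam * (t₁ - t₀)))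
          = K * d i₁ * Real.exp (-lam * (t₁ - t₀)) := by ring
      rw [h5] at hgt
      linarith
    have hμ0 : 0 < μ := lt_trans hK0 hμK
    have hPhieq : |x i ts| * Real.exp (lam * (ts - t₀)) / d i = μ := by
      rw [htsdef, hμdef]; exact hieq.symm
    have hBeq : |x i ts| = μ * d i * Real.exp (-lam * (ts - t₀)) := by
      rw [div_eq_iff (hd i).ne'] at hPhieq
      have h4 := congrArg (fun z => z * Real.exp (-lam * (ts - t₀))) hPhieq
      rw [mul_assoc, ← Real.exp_add,
        (show lam * (ts - t₀) + -lam * (ts - t₀) = 0 by ring),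
        Real.exp_zero, mul_one] at h4
      exact h4
    have hts0 : t₀ < ts := by
      rcases eq_or_lt_of_le hts1.1 with heq2 | h
      · exfalso
        have h1 : |x i ts| ≤ S := by
          rw [← heq2]; exact hcoord i t₀ (by linarith) le_rfl
        have h2 : μ * d i * Real.exp (-lam * (ts - t₀)) = μ * d i := by
          rw [← heq2, sub_self, mul_zero, Real.exp_zero, mul_one]
        have h3 : μ * dm ≤ μ * d i := mul_le_mul_of_nonneg_left (hdm_le i) hμ0.le
        have h4 : K * dm < μ * dm := mul_lt_mul_of_pos_right hμK hdm0
        have h5 : S + ε < μ * dm := by rw [← hKdm]; exact h4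
        rw [hBeq, h2] at h1
        linarith
      · exact h
    have hball : ∀ j s, t₀ - σ ≤ s → s ≤ ts →
        |x j s| ≤ μ * d j * Real.exp (-lam * (s - t₀)) := by
      intro j s h1 h2
      rcases le_or_gt t₀ s with h3 | h3
      · exact hbound j s h3 (h2.trans hts1.2)
      · have h4 : |x j s| ≤ S := hcoord j s h1 h3.le
        have h5 : (1 : ℝ) ≤ Real.exp (-lam * (s - t₀)) := by
          rw [← Real.exp_zero]
          apply Real.exp_le_exp.mpr
          have := mul_nonneg hlam0.le (show (0:ℝ) ≤ t₀ - s by linarith)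
          linarith
        have h6 : S < μ * dm := by
          have h7 : K * dm < μ * dm := mul_lt_mul_of_pos_right hμK hdm0
          rw [hKdm] at h7; linarith
        have h7 : μ * dm ≤ μ * d j := mul_le_mul_of_nonneg_left (hdm_le j) hμ0.le
        have h8 : μ * d j ≤ μ * d j * Real.exp (-lam * (s - t₀)) :=
          le_mul_of_one_le_right (mul_nonneg hμ0.le (hd j).le) h5
        linarith
    -- sign normalization
    obtain ⟨sgn, hsgndef⟩ : ∃ z : ℝ, z = if 0 ≤ x i ts then (1:ℝ) else -1 := ⟨_, rfl⟩
    have hsgnx : sgn * x i ts = |x i ts| := by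
      rw [hsgndef]
      by_cases hxx : 0 ≤ x i ts
      · rw [if_pos hxx, one_mul, abs_of_nonneg hxx]
      · push_neg at hxx
        rw [if_neg (not_le.mpr hxx), abs_of_neg hxx]; ring
    have hsgn1 : sgn = 1 ∨ sgn = -1 := by
      rw [hsgndef]; split_ifs
      · exact Or.inl rfl
      · exact Or.inr rfl
    have hsgnabs : ∀ z : ℝ, sgn * z ≤ |z| := by
      intro z
      rcases hsgn1 with hs | hs
      · rw [hs, one_mul]; exact le_abs_self z
      · rw [hs]
        have : -z ≤ |z| := neg_le_abs z
        linarith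
    -- apply the core lemma
    have hQ0 : 0 ≤ α i * (d i - 1) := mul_nonneg (hα i).le (by linarith [hd1 i])
    refine core_lemma t₀ ts lam (α i) (μ * d i)
      (μ * Real.exp (lam * σ) * (α i * (d i - 1))) (μ * (α i / 2)) hts0 hlam0 (hα i)
      (mul_pos hμ0 (hd i)) (mul_pos hμ0 (by linarith [hα i]))
      (mul_nonneg (mul_nonneg hμ0.le (Real.exp_pos _).le) hQ0)
      (fun s => sgn * x i s) (a i)
      (fun s => sgn * (∑ j ∈ Finset.univ.erase i, aoff i j s * x j (g i j s)))
      (continuous_const.mul (hxc i)) ?_ ?_ ?_ ?_ ?_ ?_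
    · -- heq
      intro t' h1 h2
      have hInts := hxint i ts hts1.1
      have hsub : Set.uIcc t' ts ⊆ Set.uIcc t₀ ts := by
        rw [Set.uIcc_of_le h2, Set.uIcc_of_le hts1.1]
        exact Set.Icc_subset_Icc h1 le_rfl
      have hInt' := hInts.mono_set hsub
      have hfeq : (fun s => -(a i s) * (sgn * x i s) +
          sgn * (∑ j ∈ Finset.univ.erase i, aoff i j s * x j (g i j s)))
          = fun s => sgn * (-(a i s) * x i s +
            ∑ j ∈ Finset.univ.erase i, aoff i j s * x j (g i j s)) := by
        funext s; ring
      constructor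
      · show IntervalIntegrable (fun s => -(a i s) * (sgn * x i s) +
          sgn * (∑ j ∈ Finset.univ.erase i, aoff i j s * x j (g i j s)))
          volume t' ts
        rw [hfeq]
        exact hInt'.const_mul sgn
      · show sgn * x i ts = sgn * x i t' + ∫ s in t'..ts,
          (-(a i s) * (sgn * x i s) +
            sgn * (∑ j ∈ Finset.univ.erase i, aoff i j s * x j (g i j s)))
        have e3 := intervalIntegral.integral_interval_sub_left hInts (hxint i t' h1)
        have e4 : x i ts = x i t' + ∫ s in t'..ts,
            (-(a i s) * x i s +
              ∑ j ∈ Finset.univ.erase i, aoff i j s * x j (g i j s)) := by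
          rw [← e3, hxeq i ts hts1.1, hxeq i t' h1]; ring
        rw [hfeq, intervalIntegral.integral_const_mul, e4]; ring
    · -- hav
      intro s hs1 _
      exact (ha_bd i s (le_trans ht₀ hs1)).1
    · -- hub
      intro s hs1 hs2
      calc sgn * x i s ≤ |x i s| := hsgnabs _
        _ ≤ μ * d i * Real.exp (-lam * (s - t₀)) := hball i s (by linarith) hs2
    · -- hh
      intro s hs1 hs2
      have hs0' : (0:ℝ) ≤ s := le_trans ht₀ hs1
      calc sgn * (∑ j ∈ Finset.univ.erase i, aoff i j s * x j (g i j s))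
          ≤ |∑ j ∈ Finset.univ.erase i, aoff i j s * x j (g i j s)| := hsgnabs _
        _ ≤ ∑ j ∈ Finset.univ.erase i, |aoff i j s * x j (g i j s)| :=
            Finset.abs_sum_le_sum_abs _ _
        _ ≤ ∑ j ∈ Finset.univ.erase i, Aoff i j * d j *
            (μ * Real.exp (lam * σ) * Real.exp (-lam * (s - t₀))) := by
            apply Finset.sum_le_sum
            intro j hj
            have hji : j ≠ i := Finset.ne_of_mem_erase hj
            have hij : i ≠ j := hji.symm
            have hgs := hg i j s hs0'
            have hxg := hball j (g i j s) (by linarith) (by linarith)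
            have habs := haoff_bd i j hij s hs0'
            have hA0 := hAoff i j hij
            rw [abs_mul]
            have hexpg : Real.exp (-lam * (g i j s - t₀)) ≤
                Real.exp (lam * σ) * Real.exp (-lam * (s - t₀)) := by
              rw [← Real.exp_add]
              apply Real.exp_le_exp.mpr
              have := mul_le_mul_of_nonneg_left hgs.2 hlam0.le
              linarith
            have h6 : |x j (g i j s)| ≤
                μ * d j * (Real.exp (lam * σ) * Real.exp (-lam * (s - t₀))) := by
              refine hxg.trans ?_
              exact mul_le_mul_of_nonneg_left hexpg (mul_nonneg hμ0.le (hd j).le)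
            calc |aoff i j s| * |x j (g i j s)|
                ≤ Aoff i j * (μ * d j *
                  (Real.exp (lam * σ) * Real.exp (-lam * (s - t₀)))) :=
                  mul_le_mul habs h6 (abs_nonneg _) hA0
              _ = Aoff i j * d j *
                  (μ * Real.exp (lam * σ) * Real.exp (-lam * (s - t₀))) := by ring
        _ = μ * Real.exp (lam * σ) * (α i * (d i - 1)) *
            Real.exp (-lam * (s - t₀)) := by
            rw [← Finset.sum_mul, hFd i]; ring
    · -- hc
      have h1 := mul_le_mul_of_nonneg_left (key i) hμ0.le
      show μ * d i * lam + μ * Real.exp (lam * σ) * (α i * (d i - 1))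
          ≤ α i * (μ * d i) - μ * (α i / 2)
      nlinarith [h1]
    · -- hBeq
      show sgn * x i ts = μ * d i * Real.exp (-lam * (ts - t₀))
      rw [hsgnx, hBeq]
  -- pass to the limit ε → 0 and conclude
  have hfinal : ∀ i, |x i t| ≤ D / dm * Real.exp (-lam * (t - t₀)) * S := by
    intro i
    have hlim : |x i t| ≤ S / dm * (d i * Real.exp (-lam * (t - t₀))) := by
      apply le_of_forall_pos_le_add
      intro η hη
      have hc0 : 0 < d i * Real.exp (-lam * (t - t₀)) / dm :=
        div_pos (mul_pos (hd i) (Real.exp_pos _)) hdm0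
      obtain ⟨ε, hεdef⟩ : ∃ z : ℝ,
          z = η / (d i * Real.exp (-lam * (t - t₀)) / dm) := ⟨_, rfl⟩
      have hε0 : 0 < ε := by rw [hεdef]; exact div_pos hη hc0
      have h1 := main ε hε0 i t ht
      have h2 : ε * (d i * Real.exp (-lam * (t - t₀)) / dm) = η := by
        rw [hεdef]; exact div_mul_cancel₀ η hc0.ne'
      have h3 : (S + ε) / dm * (d i * Real.exp (-lam * (t - t₀)))
          = S / dm * (d i * Real.exp (-lam * (t - t₀)))
            + ε * (d i * Real.exp (-lam * (t - t₀)) / dm) := by ring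
      rw [h3, h2] at h1
      exact h1
    refine hlim.trans ?_
    have h3 : S / dm * (d i * Real.exp (-lam * (t - t₀)))
        = S * d i * (Real.exp (-lam * (t - t₀)) / dm) := by ring
    have h4 : D / dm * Real.exp (-lam * (t - t₀)) * S
        = S * D * (Real.exp (-lam * (t - t₀)) / dm) := by ring
    rw [h3, h4]
    exact mul_le_mul_of_nonneg_right (mul_le_mul_of_nonneg_left (hD_ge i) hS0)
      (div_pos (Real.exp_pos _) hdm0).le
  rw [← hSdef]
  refine (pi_norm_le_iff_of_nonneg ?_).mpr ?_
  · exact mul_nonneg (mul_nonneg (div_pos hD0 hdm0).le (Real.exp_pos _).le) hS0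
  · intro i
    rw [Real.norm_eq_abs]
    exact hfinal i
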